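/- Every left alternative CA-AG-groupoid is middle nuclear square; that is, if a magma S satisfies the left invertive law, cyclic associativity, and the left alternative law (a·a)·b = a·(a·b) for all a,b, then a·((b·b)·c) = (a·(b·b))·c for all a,b,c in S. -/
import Mathlib


theorem left_alternative_CA_AG_groupoid_is_middle_nuclear_square {S : Type*} [Mul S]
    (li : ∀ a b c : S, (a * b) * c = (c * b) * a)
    (ca : ∀ a b c : S, a * (b * c) = c * (a * b))
    (la : ∀ a b : S, (a * a) * b = a * (a * b)) :
    ∀ a b c : S, a * ((b * b) * c) = (a * (b * b)) * c := by
  have medial : ∀ a b c d : S, (a * b) * (c * d) = (a * c) * (b * d) := by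
    intro a b c d
    rw [li a b (c * d), li c d b, li (b * d) c a]
  intro a b c
  calc a * ((b * b) * c) = c * (a * (b * b)) := ca a (b * b) c
    _ = c * (b * (a * b)) := by rw [ca a b b]
    _ = (a * b) * (c * b) := ca c b (a * b)
    _ = (a * c) * (b * b) := medial a b c b
    _ = ((b * b) * c) * a := li a c (b * b)
    _ = (b * (b * c)) * a := by rw [la b c]
    _ = (a * (b * c)) * b := li b (b * c) a
    _ = (c * (a * b)) * b := by rw [ca a b c]
    _ = (b * (a * b)) * c := li c (a * b) b
    _ = (a * (b * b)) * c := by rw [← ca a b b]
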